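/- Let ρ = (1/2)(I + r₁σ₁ + r₂σ₂ + r₃σ₃) be a single-qubit density matrix with Bloch vector r = (r₁, r₂, r₃), |r| ≤ 1. Then the modified trace distance coherence and the trace-norm mixedness satisfy the trade-off C'_tr(ρ) + M_tr(ρ) = √(r₁² + r₂²) + (1 − |r|) ≤ 1, with equality if and only if r₃ = 0. -/

import Mathlib

set_option linter.unreachableTactic false
set_option linter.unusedTactic false


open Matrix
open scoped ComplexOrder

/-- The trace norm of a matrix `A`: `‖A‖_tr = Tr √(AᴴA)`. -/
noncomputable def traceNorm {d : ℕ} (A : Matrix (Fin d) (Fin d) ℂ) : ℝ :=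
  (((Matrix.posSemidef_conjTranspose_mul_self A).1.eigenvectorUnitary.1 *
    diagonal ((fun x : ℝ => (x : ℂ)) ∘ Real.sqrt ∘ (Matrix.posSemidef_conjTranspose_mul_self A).1.eigenvalues) *
    (star (Matrix.posSemidef_conjTranspose_mul_self A).1.eigenvectorUnitary :
      Matrix (Fin d) (Fin d) ℂ)).trace).re


/-- The Pauli matrices. -/
noncomputable def σ1 : Matrix (Fin 2) (Fin 2) ℂ := !![0, 1; 1, 0]
noncomputable def σ2 : Matrix (Fin 2) (Fin 2) ℂ := !![0, -Complex.I; Complex.I, 0]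
noncomputable def σ3 : Matrix (Fin 2) (Fin 2) ℂ := !![1, 0; 0, -1]

/-! ### Auxiliary lemmas -/

lemma psd_smul_real {M : Matrix (Fin 2) (Fin 2) ℂ} (hM : M.PosSemidef) {c : ℝ} (hc : 0 ≤ c) :
    ((c : ℂ) • M).PosSemidef := by
  exact hM.smul (by simpa using hc)

lemma cayley2 (M : Matrix (Fin 2) (Fin 2) ℂ) : M ^ 2 = M.trace • M - M.det • 1 := by
  ext i j
  rw [pow_two]
  fin_cases i <;> fin_cases j <;>
    simp [Matrix.mul_apply, Fin.sum_univ_two, Matrix.trace_fin_two, Matrix.det_fin_two,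
      Matrix.one_apply] <;> ring

/-- The sum of `normSq` of the entries of a `2×2` complex matrix. -/
noncomputable def NN (A : Matrix (Fin 2) (Fin 2) ℂ) : ℝ :=
  Complex.normSq (A 0 0) + Complex.normSq (A 0 1) + Complex.normSq (A 1 0) + Complex.normSq (A 1 1)

lemma NN_nonneg (A : Matrix (Fin 2) (Fin 2) ℂ) : 0 ≤ NN A := by
  unfold NN
  have := Complex.normSq_nonneg (A 0 0)
  have := Complex.normSq_nonneg (A 0 1)
  have := Complex.normSq_nonneg (A 1 0)
  have := Complex.normSq_nonneg (A 1 1)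
  linarith

lemma trace_conjTranspose_mul (A : Matrix (Fin 2) (Fin 2) ℂ) :
    (Aᴴ * A).trace = ((NN A : ℝ) : ℂ) := by
  unfold NN
  simp [Matrix.trace_fin_two, Matrix.mul_apply, Fin.sum_univ_two, Matrix.conjTranspose_apply,
    Complex.normSq_eq_conj_mul_self]
  ring

lemma det_conjTranspose_mul (A : Matrix (Fin 2) (Fin 2) ℂ) :
    (Aᴴ * A).det = ((‖A.det‖ ^ 2 : ℝ) : ℂ) := by
  rw [Matrix.det_mul, Matrix.det_conjTranspose, Complex.sq_norm,
    Complex.normSq_eq_conj_mul_self]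
  simp [mul_comm]

set_option linter.unreachableTactic false in
set_option linter.unusedTactic false in
/-- Closed formula for the trace norm of a `2×2` complex matrix:
`‖A‖_tr = √(∑ |Aᵢⱼ|² + 2 |det A|)`. -/
lemma traceNorm_formula (A : Matrix (Fin 2) (Fin 2) ℂ) :
    traceNorm A = Real.sqrt (NN A + 2 * ‖A.det‖) := by
  have hM : (Aᴴ * A).PosSemidef := Matrix.posSemidef_conjTranspose_mul_self A
  have key : traceNorm A = Real.sqrt (hM.1.eigenvalues 0) + Real.sqrt (hM.1.eigenvalues 1) := by
    unfold traceNorm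
    rw [Matrix.trace_mul_comm, ← Matrix.mul_assoc, Unitary.coe_star_mul_self, Matrix.one_mul,
      trace_diagonal, Fin.sum_univ_two]
    simp
  have hl0 := hM.eigenvalues_nonneg 0
  have hl1 := hM.eigenvalues_nonneg 1
  have htr := hM.1.trace_eq_sum_eigenvalues
  rw [trace_conjTranspose_mul, Fin.sum_univ_two] at htr
  have htrR : NN A = hM.1.eigenvalues 0 + hM.1.eigenvalues 1 := by
    simpa using congrArg Complex.re htr
  have hdet := hM.1.det_eq_prod_eigenvalues
  rw [det_conjTranspose_mul, Fin.prod_univ_two] at hdet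
  have hdetR : ‖A.det‖ ^ 2 = hM.1.eigenvalues 0 * hM.1.eigenvalues 1 := by
    simpa [← Complex.ofReal_pow] using congrArg Complex.re hdet
  have hs : 0 ≤ ‖A.det‖ := norm_nonneg _
  have hab : Real.sqrt (hM.1.eigenvalues 0) * Real.sqrt (hM.1.eigenvalues 1) = ‖A.det‖ := by
    rw [← Real.sqrt_mul hl0, ← hdetR, Real.sqrt_sq hs]
  rw [key, ← Real.sqrt_sq (add_nonneg (Real.sqrt_nonneg _) (Real.sqrt_nonneg _))]
  congr 1
  rw [add_sq, Real.sq_sqrt hl0, Real.sq_sqrt hl1, htrR]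
  linear_combination 2 * hab

lemma NN_het (a b x y : ℝ) :
    NN !![(a:ℂ), (x:ℂ) - (y:ℂ)*Complex.I; (x:ℂ)+(y:ℂ)*Complex.I, (b:ℂ)]
      = a^2 + b^2 + 2*(x^2+y^2) := by
  unfold NN
  simp [Complex.normSq_apply]
  ring

lemma det_het (a b x y : ℝ) :
    Matrix.det !![(a:ℂ), (x:ℂ) - (y:ℂ)*Complex.I; (x:ℂ)+(y:ℂ)*Complex.I, (b:ℂ)]
      = ((a*b - (x^2+y^2) : ℝ) : ℂ) := by
  rw [Matrix.det_fin_two]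
  simp
  linear_combination (-(y:ℂ)^2) * Complex.I_sq

/-- Trace norm of a Hermitian `2×2` matrix with real diagonal `a, b` and off-diagonal
entries `x ∓ y i`. -/
lemma traceNorm_het (a b x y : ℝ) :
    traceNorm !![(a:ℂ), (x:ℂ) - (y:ℂ)*Complex.I; (x:ℂ)+(y:ℂ)*Complex.I, (b:ℂ)]
      = Real.sqrt (a^2 + b^2 + 2*(x^2+y^2) + 2 * |a*b - (x^2+y^2)|) := by
  rw [traceNorm_formula, NN_het, det_het, Complex.norm_real, Real.norm_eq_abs]

/-- Trade-off between coherence and mixedness for a single-qubit state: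
`C'_tr(ρ) + M_tr(ρ) = √(r₁² + r₂²) + (1 − |r|) ≤ 1`, with equality iff `r₃ = 0`. -/
theorem coherence_mixedness_tradeoff_qubit (r₁ r₂ r₃ : ℝ)
    (hr : Real.sqrt (r₁ ^ 2 + r₂ ^ 2 + r₃ ^ 2) ≤ 1)
    (ρ : Matrix (Fin 2) (Fin 2) ℂ)
    (hρ : ρ = ((1 : ℝ) / 2) • (1 + r₁ • σ1 + r₂ • σ2 + r₃ • σ3)) :
    sInf {x : ℝ | ∃ (l : ℝ) (δ : Matrix (Fin 2) (Fin 2) ℂ),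
        0 ≤ l ∧ δ.PosSemidef ∧ δ.trace = 1 ∧ δ.IsDiag ∧
        x = traceNorm (ρ - l • δ)}
      + (1 - traceNorm (ρ - ((2 : ℝ)⁻¹) • 1))
      = Real.sqrt (r₁ ^ 2 + r₂ ^ 2) + (1 - Real.sqrt (r₁ ^ 2 + r₂ ^ 2 + r₃ ^ 2)) ∧
    Real.sqrt (r₁ ^ 2 + r₂ ^ 2) + (1 - Real.sqrt (r₁ ^ 2 + r₂ ^ 2 + r₃ ^ 2)) ≤ 1 ∧
    (Real.sqrt (r₁ ^ 2 + r₂ ^ 2) + (1 - Real.sqrt (r₁ ^ 2 + r₂ ^ 2 + r₃ ^ 2)) = 1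
      ↔ r₃ = 0) := by
  have hXnn : (0:ℝ) ≤ r₁ ^ 2 + r₂ ^ 2 + r₃ ^ 2 := by positivity
  have hX1 : r₁ ^ 2 + r₂ ^ 2 + r₃ ^ 2 ≤ 1 := by
    nlinarith [Real.sq_sqrt hXnn, Real.sqrt_nonneg (r₁ ^ 2 + r₂ ^ 2 + r₃ ^ 2)]
  have hr3a : -1 ≤ r₃ := by nlinarith
  have hr3b : r₃ ≤ 1 := by nlinarith
  -- entries of ρ
  have hρ' : ρ = !![(((1 + r₃) / 2 : ℝ) : ℂ),
      (((r₁ / 2 : ℝ) : ℂ) - ((r₂ / 2 : ℝ) : ℂ) * Complex.I);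
      (((r₁ / 2 : ℝ) : ℂ) + ((r₂ / 2 : ℝ) : ℂ) * Complex.I), (((1 - r₃) / 2 : ℝ) : ℂ)] := by
    subst hρ
    ext i j
    fin_cases i <;> fin_cases j <;>
      simp [σ1, σ2, σ3, Matrix.one_apply, Complex.real_smul] <;> push_cast <;> ring
  -- trace norm for the mixedness term
  have hA1 : ρ - ((2 : ℝ)⁻¹) • 1 = !![((r₃ / 2 : ℝ) : ℂ),
      (((r₁ / 2 : ℝ) : ℂ) - ((r₂ / 2 : ℝ) : ℂ) * Complex.I);
      (((r₁ / 2 : ℝ) : ℂ) + ((r₂ / 2 : ℝ) : ℂ) * Complex.I), ((-(r₃ / 2) : ℝ) : ℂ)] := by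
    rw [hρ']
    ext i j
    fin_cases i <;> fin_cases j <;>
      simp [Matrix.one_apply, Complex.real_smul] <;> push_cast <;> ring
  have hmix : traceNorm (ρ - ((2 : ℝ)⁻¹) • 1) = Real.sqrt (r₁ ^ 2 + r₂ ^ 2 + r₃ ^ 2) := by
    rw [hA1, traceNorm_het, abs_of_nonpos (by nlinarith)]
    exact congrArg Real.sqrt (by ring)
  -- the candidate incoherent state δ₀
  set S : Set ℝ := {x : ℝ | ∃ (l : ℝ) (δ : Matrix (Fin 2) (Fin 2) ℂ),
        0 ≤ l ∧ δ.PosSemidef ∧ δ.trace = 1 ∧ δ.IsDiag ∧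
        x = traceNorm (ρ - l • δ)} with hSdef
  have hmem : Real.sqrt (r₁ ^ 2 + r₂ ^ 2) ∈ S := by
    refine ⟨1, Matrix.diagonal ![(((1 + r₃) / 2 : ℝ) : ℂ), (((1 - r₃) / 2 : ℝ) : ℂ)],
      zero_le_one, ?_, ?_, Matrix.isDiag_diagonal _, ?_⟩
    · refine Matrix.PosSemidef.diagonal ?_
      have hx : (0 : ℂ) ≤ (((1 + r₃) / 2 : ℝ) : ℂ) := Complex.zero_le_real.2 (by nlinarith)
      have hy : (0 : ℂ) ≤ (((1 - r₃) / 2 : ℝ) : ℂ) := Complex.zero_le_real.2 (by nlinarith)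
      intro i
      fin_cases i
      · exact hx
      · exact hy
    · rw [Matrix.trace_diagonal, Fin.sum_univ_two]
      show (((1 + r₃) / 2 : ℝ) : ℂ) + (((1 - r₃) / 2 : ℝ) : ℂ) = 1
      push_cast
      ring
    · have hA2 : ρ - (1 : ℝ) • Matrix.diagonal ![(((1 + r₃) / 2 : ℝ) : ℂ), (((1 - r₃) / 2 : ℝ) : ℂ)]
          = !![((0 : ℝ) : ℂ),
          (((r₁ / 2 : ℝ) : ℂ) - ((r₂ / 2 : ℝ) : ℂ) * Complex.I);
          (((r₁ / 2 : ℝ) : ℂ) + ((r₂ / 2 : ℝ) : ℂ) * Complex.I), ((0 : ℝ) : ℂ)] := by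
        rw [hρ']
        ext i j
        fin_cases i <;> fin_cases j <;>
          simp [Matrix.diagonal_apply, Complex.real_smul] <;> push_cast <;> ring
      rw [hA2, traceNorm_het, abs_of_nonpos (by nlinarith)]
      exact (congrArg Real.sqrt (by ring)).symm
  have hlb : ∀ x ∈ S, Real.sqrt (r₁ ^ 2 + r₂ ^ 2) ≤ x := by
    rintro x ⟨l, δ, hl, hpsd, htrδ, hdiag, rfl⟩
    have h01 : δ 0 1 = 0 := hdiag (by decide)
    have h10 : δ 1 0 = 0 := hdiag (by decide)
    have h00 : δ 0 0 = (((δ 0 0).re : ℝ) : ℂ) := by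
      have hconj : (starRingEnd ℂ) (δ 0 0) = δ 0 0 := by
        have := congrFun (congrFun hpsd.1 0) 0
        simpa [Matrix.conjTranspose_apply] using this
      exact (Complex.conj_eq_iff_re.1 hconj).symm
    have h11 : δ 1 1 = (((δ 1 1).re : ℝ) : ℂ) := by
      have hconj : (starRingEnd ℂ) (δ 1 1) = δ 1 1 := by
        have := congrFun (congrFun hpsd.1 1) 1
        simpa [Matrix.conjTranspose_apply] using this
      exact (Complex.conj_eq_iff_re.1 hconj).symm
    set p : ℝ := (δ 0 0).re
    set q : ℝ := (δ 1 1).re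
    have hA3 : ρ - l • δ = !![(((1 + r₃) / 2 - l * p : ℝ) : ℂ),
        (((r₁ / 2 : ℝ) : ℂ) - ((r₂ / 2 : ℝ) : ℂ) * Complex.I);
        (((r₁ / 2 : ℝ) : ℂ) + ((r₂ / 2 : ℝ) : ℂ) * Complex.I),
        (((1 - r₃) / 2 - l * q : ℝ) : ℂ)] := by
      rw [hρ']
      ext i j
      fin_cases i <;> fin_cases j <;>
        simp [h00, h01, h10, h11, Complex.real_smul] <;> push_cast <;> ring
    rw [hA3, traceNorm_het]
    apply Real.sqrt_le_sqrt
    clear hA3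
    set a : ℝ := (1 + r₃) / 2 - l * p
    set b : ℝ := (1 - r₃) / 2 - l * q
    clear_value a b
    have habs : (r₁ / 2) ^ 2 + (r₂ / 2) ^ 2 - a * b ≤ |a * b - ((r₁ / 2) ^ 2 + (r₂ / 2) ^ 2)| := by
      rw [abs_sub_comm]
      exact le_abs_self _
    nlinarith [sq_nonneg (a - b), abs_nonneg (a * b - ((r₁ / 2) ^ 2 + (r₂ / 2) ^ 2))]
  have hInf : sInf S = Real.sqrt (r₁ ^ 2 + r₂ ^ 2) :=
    le_antisymm (csInf_le ⟨Real.sqrt (r₁ ^ 2 + r₂ ^ 2), hlb⟩ hmem) (le_csInf ⟨_, hmem⟩ hlb)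
  have hc_le : Real.sqrt (r₁ ^ 2 + r₂ ^ 2) ≤ Real.sqrt (r₁ ^ 2 + r₂ ^ 2 + r₃ ^ 2) :=
    Real.sqrt_le_sqrt (by nlinarith)
  refine ⟨by rw [hInf, hmix], by linarith, ?_, ?_⟩
  · intro h
    have hceq : Real.sqrt (r₁ ^ 2 + r₂ ^ 2) = Real.sqrt (r₁ ^ 2 + r₂ ^ 2 + r₃ ^ 2) := by
      linarith
    have h2 : r₁ ^ 2 + r₂ ^ 2 = r₁ ^ 2 + r₂ ^ 2 + r₃ ^ 2 := by
      have := congrArg (· ^ 2) hceq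
      simpa [Real.sq_sqrt (show (0:ℝ) ≤ r₁ ^ 2 + r₂ ^ 2 by positivity),
        Real.sq_sqrt hXnn] using this
    have : r₃ ^ 2 = 0 := by linarith
    exact pow_eq_zero_iff two_ne_zero |>.1 this
  · intro h
    subst h
    norm_num
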